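/- The Ballot Completion rule satisfies partition consistency: if the co-approval partition of profile P is C₁,…,C_k, then ◁ ∈ BC(P) if and only if each C_j is an interval of ◁ and the restriction of ◁ to C_j is BC-optimal for the restriction of P to C_j. -/

import Mathlib

open scoped Classical

variable {C : Type*}

/-- `r` is an axis: a strict linear order on the candidates. -/
def IsAxis (r : C → C → Prop) : Prop :=
  (∀ x y : C, x = y ∨ r x y ∨ r y x) ∧ (∀ x y z : C, r x y → r y z → r x z) ∧ (∀ x : C, ¬ r x x)

/-- `A` is an interval of the axis `r`. -/
def IsInterval (r : C → C → Prop) (A : Set C) : Prop :=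
  ∀ a ∈ A, ∀ b ∈ A, ∀ c : C, r a c → r c b → c ∈ A

/-- Voter Deletion cost. -/
noncomputable def costVD (r : C → C → Prop) (A : Set C) : ℕ :=
  if IsInterval r A then 0 else 1

/-- Minimum Flips cost. -/
noncomputable def costMF (r : C → C → Prop) (A : Set C) : ℕ :=
  sInf {n : ℕ | ∃ x ∈ A, ∃ y ∈ A, (r x y ∨ x = y) ∧
    n = {z ∈ A | r z x ∨ r y z}.ncard + {z : C | z ∉ A ∧ r x z ∧ r z y}.ncard}

/-- Ballot Completion cost. -/
noncomputable def costBC (r : C → C → Prop) (A : Set C) : ℕ :=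
  {b : C | b ∉ A ∧ ∃ a ∈ A, ∃ c ∈ A, r a b ∧ r b c}.ncard

/-- Minimum Swaps cost. -/
noncomputable def costMS [Fintype C] (r : C → C → Prop) (A : Set C) : ℕ :=
  ∑ x : C, if x ∈ A then 0 else min {y ∈ A | r y x}.ncard {y ∈ A | r x y}.ncard

/-- Forbidden Triples cost. -/
noncomputable def costFT (r : C → C → Prop) (A : Set C) : ℕ :=
  {t : C × C × C | t.1 ∈ A ∧ t.2.2 ∈ A ∧ t.2.1 ∉ A ∧ r t.1 t.2.1 ∧ r t.2.1 t.2.2}.ncard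

/-- Total cost of an axis on a profile (multiset of ballots). -/
noncomputable def profileCost (cost : (C → C → Prop) → Set C → ℕ)
    (P : Multiset (Set C)) (r : C → C → Prop) : ℕ :=
  (P.map (cost r)).sum

/-- `r` is an optimal axis for profile `P` under the given cost function. -/
def OptimalAxis (cost : (C → C → Prop) → Set C → ℕ)
    (P : Multiset (Set C)) (r : C → C → Prop) : Prop :=
  IsAxis r ∧ ∀ r' : C → C → Prop, IsAxis r' → profileCost cost P r ≤ profileCost cost P r'

/-- The co-approval equivalence class of candidate `x` in profile `P`. -/
def coApprovalClass (P : Multiset (Set C)) (x : C) : Set C :=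
  {y : C | Relation.EqvGen (fun u v => ∃ A ∈ P, u ∈ A ∧ v ∈ A) x y}

-- ===== helpers =====
private def coR (P : Multiset (Set C)) (u v : C) : Prop := ∃ A ∈ P, u ∈ A ∧ v ∈ A

private lemma mem_class_iff {P : Multiset (Set C)} {x y : C} :
    y ∈ coApprovalClass P x ↔ Relation.EqvGen (coR P) x y := Iff.rfl

private lemma mem_class_self (P : Multiset (Set C)) (x : C) : x ∈ coApprovalClass P x :=
  Relation.EqvGen.refl x

private lemma class_eq_of_mem {P : Multiset (Set C)} {x y : C} (h : y ∈ coApprovalClass P x) :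
    coApprovalClass P y = coApprovalClass P x := by
  have h' : Relation.EqvGen (coR P) x y := h
  ext z
  exact ⟨fun hz => Relation.EqvGen.trans _ _ _ h' hz,
    fun hz => Relation.EqvGen.trans _ _ _ (Relation.EqvGen.symm _ _ h') hz⟩

private lemma ballot_subset_class {P : Multiset (Set C)} {A : Set C} (hA : A ∈ P) {a : C}
    (ha : a ∈ A) : A ⊆ coApprovalClass P a :=
  fun b hb => Relation.EqvGen.rel a b ⟨A, hA, ha, hb⟩

private lemma axis_asymm {r : C → C → Prop} (h : IsAxis r) {a b : C} (hab : r a b) : ¬ r b a :=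
  fun hba => h.2.2 a (h.2.1 a b a hab hba)

private lemma axis_sub {r : C → C → Prop} (h : IsAxis r) (S : Set C) :
    IsAxis (fun u v : ↥S => r u v) := by
  refine ⟨fun x y => ?_, fun x y z hxy hyz => h.2.1 x y z hxy hyz, fun x => h.2.2 x⟩
  rcases h.1 x y with h' | h' | h'
  · exact Or.inl (Subtype.ext h')
  · exact Or.inr (Or.inl h')
  · exact Or.inr (Or.inr h')

private def btw (r : C → C → Prop) (A : Set C) : Set C :=
  {b : C | b ∉ A ∧ ∃ a ∈ A, ∃ c ∈ A, r a b ∧ r b c}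

private lemma costBC_eq_btw (r : C → C → Prop) (A : Set C) : costBC r A = (btw r A).ncard := rfl

private lemma costBC_sub_eq [Fintype C] {r : C → C → Prop} {S A : Set C} (hAS : A ⊆ S) :
    costBC (fun u v : ↥S => r u v) (Subtype.val ⁻¹' A) = (btw r A ∩ S).ncard := by
  have hset : {b : ↥S | b ∉ (Subtype.val ⁻¹' A : Set ↥S) ∧ ∃ a ∈ (Subtype.val ⁻¹' A : Set ↥S),
      ∃ c ∈ (Subtype.val ⁻¹' A : Set ↥S), r ↑a ↑b ∧ r ↑b ↑c} = Subtype.val ⁻¹' (btw r A) := by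
    ext b
    constructor
    · rintro ⟨hb, a, ha, c, hc, h1, h2⟩
      exact ⟨hb, (a : C), ha, (c : C), hc, h1, h2⟩
    · rintro ⟨hb, a, ha, c, hc, h1, h2⟩
      exact ⟨hb, ⟨a, hAS ha⟩, ha, ⟨c, hAS hc⟩, hc, h1, h2⟩
  rw [show costBC (fun u v : ↥S => r u v) (Subtype.val ⁻¹' A) = ({b : ↥S | b ∉ (Subtype.val ⁻¹' A : Set ↥S) ∧ ∃ a ∈ (Subtype.val ⁻¹' A : Set ↥S), ∃ c ∈ (Subtype.val ⁻¹' A : Set ↥S), r ↑a ↑b ∧ r ↑b ↑c}).ncard from rfl, hset,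
    ← Set.ncard_image_of_injective _ Subtype.val_injective,
    Set.image_preimage_eq_inter_range, Subtype.range_coe]

private lemma costBC_sub_le [Fintype C] {r : C → C → Prop} {S A : Set C} (hAS : A ⊆ S) :
    costBC (fun u v : ↥S => r u v) (Subtype.val ⁻¹' A) ≤ costBC r A := by
  rw [costBC_sub_eq hAS, costBC_eq_btw]
  exact Set.ncard_le_ncard Set.inter_subset_left (Set.toFinite _)

private lemma btw_subset_of_interval {r : C → C → Prop} {S A : Set C}
    (hS : IsInterval r S) (hAS : A ⊆ S) : btw r A ⊆ S := by
  rintro b ⟨_, a, ha, c, hc, h1, h2⟩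
  exact hS a (hAS ha) c (hAS hc) b h1 h2

private lemma costBC_sub_eq_of_interval [Fintype C] {r : C → C → Prop} {S A : Set C}
    (hS : IsInterval r S) (hAS : A ⊆ S) :
    costBC (fun u v : ↥S => r u v) (Subtype.val ⁻¹' A) = costBC r A := by
  rw [costBC_sub_eq hAS, costBC_eq_btw,
    Set.inter_eq_self_of_subset_left (btw_subset_of_interval hS hAS)]

-- ===== rank and the contiguous rearrangement =====
private noncomputable def rank [Fintype C] (r : C → C → Prop) (x : C) : ℕ := {y : C | r y x}.ncard

private lemma rank_lt_rank [Fintype C] {r : C → C → Prop} (h : IsAxis r) {x y : C}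
    (hxy : r x y) : rank r x < rank r y := by
  apply Set.ncard_lt_ncard _ (Set.toFinite _)
  constructor
  · exact fun z hz => h.2.1 z x y hz hxy
  · intro hsub
    exact h.2.2 x (hsub hxy)

private lemma rank_lt_iff [Fintype C] {r : C → C → Prop} (h : IsAxis r) {x y : C} :
    r x y ↔ rank r x < rank r y := by
  refine ⟨rank_lt_rank h, fun hr => ?_⟩
  rcases h.1 x y with rfl | h' | h'
  · exact absurd hr (lt_irrefl _)
  · exact h'
  · exact absurd (rank_lt_rank h h') (by omega)

private lemma rank_injective [Fintype C] {r : C → C → Prop} (h : IsAxis r) {x y : C}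
    (hxy : x ≠ y) : rank r x ≠ rank r y := by
  rcases h.1 x y with rfl | h' | h'
  · exact absurd rfl hxy
  · exact Nat.ne_of_lt (rank_lt_rank h h')
  · exact (Nat.ne_of_lt (rank_lt_rank h h')).symm

private noncomputable def key [Fintype C] (P : Multiset (Set C)) (r : C → C → Prop) (x : C) : ℕ :=
  sInf (rank r '' coApprovalClass P x)

private lemma key_eq_of_class_eq [Fintype C] {P : Multiset (Set C)} {r : C → C → Prop} {u v : C}
    (h : coApprovalClass P u = coApprovalClass P v) : key P r u = key P r v := by
  unfold key; rw [h]

private lemma key_mem [Fintype C] (P : Multiset (Set C)) (r : C → C → Prop) (x : C) :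
    ∃ a ∈ coApprovalClass P x, key P r x = rank r a := by
  have hne : (rank r '' coApprovalClass P x).Nonempty :=
    ⟨rank r x, x, mem_class_self P x, rfl⟩
  obtain ⟨a, ha, hra⟩ := Nat.sInf_mem hne
  exact ⟨a, ha, hra.symm⟩

private lemma key_ne_of_class_ne [Fintype C] {P : Multiset (Set C)} {r : C → C → Prop}
    (h : IsAxis r) {u v : C} (hne : coApprovalClass P u ≠ coApprovalClass P v) :
    key P r u ≠ key P r v := by
  obtain ⟨a, ha, hka⟩ := key_mem P r u
  obtain ⟨b, hb, hkb⟩ := key_mem P r v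
  rw [hka, hkb]
  apply rank_injective h
  rintro rfl
  exact hne ((class_eq_of_mem ha).symm.trans (class_eq_of_mem hb))

/-- The contiguous rearrangement of axis `r` w.r.t. the co-approval partition. -/
private noncomputable def cr [Fintype C] (P : Multiset (Set C)) (r : C → C → Prop)
    (u v : C) : Prop :=
  key P r u < key P r v ∨ (coApprovalClass P u = coApprovalClass P v ∧ rank r u < rank r v)

private lemma cr_isAxis [Fintype C] {P : Multiset (Set C)} {r : C → C → Prop} (h : IsAxis r) :
    IsAxis (cr P r) := by
  refine ⟨fun x y => ?_, fun x y z hxy hyz => ?_, fun x => ?_⟩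
  · by_cases hxy : x = y
    · exact Or.inl hxy
    by_cases hc : coApprovalClass P x = coApprovalClass P y
    · have := rank_injective h hxy
      rcases Nat.lt_or_ge (rank r x) (rank r y) with h' | h'
      · exact Or.inr (Or.inl (Or.inr ⟨hc, h'⟩))
      · exact Or.inr (Or.inr (Or.inr ⟨hc.symm, by omega⟩))
    · have := key_ne_of_class_ne h hc
      rcases Nat.lt_or_ge (key P r x) (key P r y) with h' | h'
      · exact Or.inr (Or.inl (Or.inl h'))
      · exact Or.inr (Or.inr (Or.inl (by omega)))
  · rcases hxy with h1 | ⟨hc1, h1⟩ <;> rcases hyz with h2 | ⟨hc2, h2⟩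
    · exact Or.inl (by omega)
    · exact Or.inl (by rw [key_eq_of_class_eq (P := P) (r := r) hc2] at *; omega)
    · exact Or.inl (by rw [key_eq_of_class_eq (P := P) (r := r) hc1] at *; omega)
    · exact Or.inr ⟨hc1.trans hc2, by omega⟩
  · rintro (h' | ⟨-, h'⟩) <;> omega

private lemma cr_agree [Fintype C] {P : Multiset (Set C)} {r : C → C → Prop} (h : IsAxis r)
    {u v : C} (hc : coApprovalClass P u = coApprovalClass P v) : (cr P r u v ↔ r u v) := by
  have hk := key_eq_of_class_eq (P := P) (r := r) hc
  constructor
  · rintro (h' | ⟨-, h'⟩)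
    · omega
    · exact (rank_lt_iff h).2 h'
  · intro h'
    exact Or.inr ⟨hc, (rank_lt_iff h).1 h'⟩

private lemma class_interval_cr [Fintype C] {P : Multiset (Set C)} {r : C → C → Prop}
    (x : C) : IsInterval (cr P r) (coApprovalClass P x) := by
  intro u hu v hv w h1 h2
  by_cases hw : coApprovalClass P w = coApprovalClass P x
  · rw [← hw]; exact mem_class_self P w
  · exfalso
    have hcu := class_eq_of_mem hu
    have hcv := class_eq_of_mem hv
    have k1 : key P r u < key P r w := by
      rcases h1 with h' | ⟨hc, -⟩
      · exact h'
      · exact absurd (hc.symm.trans hcu) hw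
    have k2 : key P r w < key P r v := by
      rcases h2 with h' | ⟨hc, -⟩
      · exact h'
      · exact absurd (hc.trans hcv) hw
    have : key P r u = key P r v := key_eq_of_class_eq (hcu.trans hcv.symm)
    omega

private lemma cr_sub_eq [Fintype C] {P : Multiset (Set C)} {r : C → C → Prop} (h : IsAxis r)
    (x : C) : (fun u v : ↥(coApprovalClass P x) => cr P r ↑u ↑v)
      = (fun u v : ↥(coApprovalClass P x) => r ↑u ↑v) := by
  funext u v
  exact propext (cr_agree h ((class_eq_of_mem u.2).trans (class_eq_of_mem v.2).symm))

-- ===== crossing lemma =====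
private lemma crossing {P : Multiset (Set C)} {r : C → C → Prop} (h : IsAxis r) {x y : C}
    (hxy : Relation.EqvGen (coR P) x y) :
    ∀ w : C, ((r x w ∧ r w y) ∨ (r y w ∧ r w x)) →
      (Relation.EqvGen (coR P) x w ∨
        ∃ A ∈ P, ∃ a ∈ A, ∃ c ∈ A, (r a w ∧ r w c) ∧ Relation.EqvGen (coR P) x a) := by
  induction hxy with
  | rel u v huv =>
    intro w hw
    obtain ⟨A, hA, hu, hv⟩ := huv
    right
    rcases hw with ⟨h1, h2⟩ | ⟨h1, h2⟩
    · exact ⟨A, hA, u, hu, v, hv, ⟨h1, h2⟩, Relation.EqvGen.refl u⟩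
    · exact ⟨A, hA, v, hv, u, hu, ⟨h1, h2⟩, Relation.EqvGen.rel u v ⟨A, hA, hu, hv⟩⟩
  | refl u =>
    intro w hw
    exfalso
    rcases hw with ⟨h1, h2⟩ | ⟨h1, h2⟩ <;> exact h.2.2 u (h.2.1 _ _ _ h1 h2)
  | symm u v huv ih =>
    intro w hw
    rcases ih w (hw.symm) with hc | ⟨A, hA, a, ha, c, hc', hr, hrel⟩
    · exact Or.inl (Relation.EqvGen.trans _ _ _ (Relation.EqvGen.symm _ _ huv) hc)
    · exact Or.inr ⟨A, hA, a, ha, c, hc', hr,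
        Relation.EqvGen.trans _ _ _ (Relation.EqvGen.symm _ _ huv) hrel⟩
  | trans u v z huv hvz ihuv ihvz =>
    intro w hw
    have comp : (Relation.EqvGen (coR P) v w ∨
        ∃ A ∈ P, ∃ a ∈ A, ∃ c ∈ A, (r a w ∧ r w c) ∧ Relation.EqvGen (coR P) v a) →
        (Relation.EqvGen (coR P) u w ∨
        ∃ A ∈ P, ∃ a ∈ A, ∃ c ∈ A, (r a w ∧ r w c) ∧ Relation.EqvGen (coR P) u a) := by
      rintro (hc | ⟨A, hA, a, ha, c, hc', hr, hrel⟩)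
      · exact Or.inl (Relation.EqvGen.trans _ _ _ huv hc)
      · exact Or.inr ⟨A, hA, a, ha, c, hc', hr, Relation.EqvGen.trans _ _ _ huv hrel⟩
    rcases hw with ⟨h1, h2⟩ | ⟨h1, h2⟩
    · rcases h.1 w v with rfl | hwv | hvw
      · exact Or.inl huv
      · exact ihuv w (Or.inl ⟨h1, hwv⟩)
      · exact comp (ihvz w (Or.inl ⟨hvw, h2⟩))
    · rcases h.1 w v with rfl | hwv | hvw
      · exact Or.inl huv
      · exact comp (ihvz w (Or.inr ⟨h1, hwv⟩))
      · exact ihuv w (Or.inr ⟨hvw, h2⟩)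

-- ===== multiset lemmas =====
private lemma sum_map_lt {α : Type*} {s : Multiset α} {f g : α → ℕ}
    (hle : ∀ a ∈ s, f a ≤ g a) {a : α} (ha : a ∈ s) (hlt : f a < g a) :
    (s.map f).sum < (s.map g).sum := by
  obtain ⟨t, rfl⟩ := Multiset.exists_cons_of_mem ha
  simp only [Multiset.map_cons, Multiset.sum_cons]
  have hts : (t.map f).sum ≤ (t.map g).sum :=
    Multiset.sum_map_le_sum_map _ _ (fun b hb => hle b (Multiset.mem_cons_of_mem hb))
  omega

private lemma profileCost_add (cost : (C → C → Prop) → Set C → ℕ) (P Q : Multiset (Set C))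
    (r : C → C → Prop) :
    profileCost cost (P + Q) r = profileCost cost P r + profileCost cost Q r := by
  simp [profileCost]

private lemma profileCost_finsum {ι : Type*} (cost : (C → C → Prop) → Set C → ℕ)
    (Q : Finset ι) (f : ι → Multiset (Set C)) (r : C → C → Prop) :
    profileCost cost (∑ S ∈ Q, f S) r = ∑ S ∈ Q, profileCost cost (f S) r := by
  classical
  induction Q using Finset.induction with
  | empty => simp [profileCost]
  | insert _ _ hni ih =>
    rw [Finset.sum_insert hni, Finset.sum_insert hni, profileCost_add, ih]

private lemma profile_decomp [Fintype C] (P : Multiset (Set C)) (hP : ∀ B ∈ P, B.Nonempty) :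
    P = ∑ S ∈ Finset.univ.image (coApprovalClass P), P.filter (fun A => A ⊆ S) := by
  classical
  ext B
  rw [Multiset.count_sum']
  by_cases hB : B ∈ P
  · obtain ⟨x0, hx0⟩ := hP B hB
    rw [Finset.sum_eq_single (coApprovalClass P x0)]
    · rw [Multiset.count_filter, if_pos (ballot_subset_class hB hx0)]
    · intro S hS hSne
      obtain ⟨y, -, rfl⟩ := Finset.mem_image.1 hS
      rw [Multiset.count_filter, if_neg]
      intro hBS
      exact hSne ((class_eq_of_mem (hBS hx0)).symm)
    · intro hmem
      exact absurd (Finset.mem_image_of_mem _ (Finset.mem_univ x0)) hmem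
  · have h0 : Multiset.count B P = 0 := Multiset.count_eq_zero_of_notMem hB
    rw [h0, Finset.sum_eq_zero]
    intro S hS
    rw [Multiset.count_filter]
    split <;> simp [h0]

-- ===== replacement of the order inside one interval class =====
private lemma side1 {r : C → C → Prop} (h : IsAxis r) {S : Set C} (hS : IsInterval r S)
    {w a b : C} (hw : w ∉ S) (ha : a ∈ S) (hb : b ∈ S) (haw : r a w) : r b w := by
  rcases h.1 b w with rfl | h' | h'
  · exact absurd hb hw
  · exact h'
  · exact absurd (hS a ha b hb w haw h') hw

private lemma side2 {r : C → C → Prop} (h : IsAxis r) {S : Set C} (hS : IsInterval r S)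
    {w a b : C} (hw : w ∉ S) (ha : a ∈ S) (hb : b ∈ S) (haw : r w a) : r w b := by
  rcases h.1 w b with rfl | h' | h'
  · exact absurd hb hw
  · exact h'
  · exact absurd (hS b hb a ha w h' haw) hw

private noncomputable def repl (S : Set C) (r : C → C → Prop) (q : ↥S → ↥S → Prop)
    (u v : C) : Prop :=
  if h : u ∈ S ∧ v ∈ S then q ⟨u, h.1⟩ ⟨v, h.2⟩ else r u v

private lemma repl_eq_out {S : Set C} {r : C → C → Prop} {q : ↥S → ↥S → Prop} {u v : C}
    (h : u ∉ S ∨ v ∉ S) : repl S r q u v ↔ r u v := by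
  rw [repl, dif_neg]
  rintro ⟨h1, h2⟩
  rcases h with h | h
  · exact h h1
  · exact h h2

private lemma repl_eq_in {S : Set C} {r : C → C → Prop} {q : ↥S → ↥S → Prop} {u v : C}
    (hu : u ∈ S) (hv : v ∈ S) : repl S r q u v ↔ q ⟨u, hu⟩ ⟨v, hv⟩ := by
  rw [repl, dif_pos ⟨hu, hv⟩]

private lemma repl_isAxis {S : Set C} {r : C → C → Prop} {q : ↥S → ↥S → Prop}
    (h : IsAxis r) (hS : IsInterval r S) (hq : IsAxis q) : IsAxis (repl S r q) := by
  refine ⟨fun x y => ?_, fun x y z hxy hyz => ?_, fun x => ?_⟩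
  · by_cases hx : x ∈ S <;> by_cases hy : y ∈ S
    · rcases hq.1 ⟨x, hx⟩ ⟨y, hy⟩ with h' | h' | h'
      · exact Or.inl (congrArg Subtype.val h')
      · exact Or.inr (Or.inl ((repl_eq_in hx hy).2 h'))
      · exact Or.inr (Or.inr ((repl_eq_in hy hx).2 h'))
    all_goals {
      rcases h.1 x y with h' | h' | h'
      · exact Or.inl h'
      · exact Or.inr (Or.inl ((repl_eq_out (by tauto)).2 h'))
      · exact Or.inr (Or.inr ((repl_eq_out (by tauto)).2 h')) }
  · by_cases hx : x ∈ S <;> by_cases hy : y ∈ S <;> by_cases hz : z ∈ S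
    · exact (repl_eq_in hx hz).2 (hq.2.1 _ _ _ ((repl_eq_in hx hy).1 hxy)
        ((repl_eq_in hy hz).1 hyz))
    · -- x,y ∈ S, z ∉ S
      exact (repl_eq_out (Or.inr hz)).2
        (side1 h hS hz hy hx ((repl_eq_out (Or.inr hz)).1 hyz))
    · -- x ∈ S, y ∉ S, z ∈ S : impossible since S interval
      exact absurd (hS x hx z hz y ((repl_eq_out (Or.inr hy)).1 hxy)
        ((repl_eq_out (Or.inl hy)).1 hyz)) hy
    · exact (repl_eq_out (Or.inr hz)).2 (h.2.1 _ _ _ ((repl_eq_out (Or.inr hy)).1 hxy)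
        ((repl_eq_out (Or.inl hy)).1 hyz))
    · -- x ∉ S, y ∈ S, z ∈ S
      exact (repl_eq_out (Or.inl hx)).2
        (side2 h hS hx hy hz ((repl_eq_out (Or.inl hx)).1 hxy))
    · exact (repl_eq_out (Or.inl hx)).2 (h.2.1 _ _ _ ((repl_eq_out (Or.inl hx)).1 hxy)
        ((repl_eq_out (Or.inr hz)).1 hyz))
    · exact (repl_eq_out (Or.inl hx)).2 (h.2.1 _ _ _ ((repl_eq_out (Or.inl hx)).1 hxy)
        ((repl_eq_out (Or.inl hy)).1 hyz))
    · exact (repl_eq_out (Or.inl hx)).2 (h.2.1 _ _ _ ((repl_eq_out (Or.inl hx)).1 hxy)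
        ((repl_eq_out (Or.inl hy)).1 hyz))
  · by_cases hx : x ∈ S
    · intro hxx
      exact hq.2.2 ⟨x, hx⟩ ((repl_eq_in hx hx).1 hxx)
    · intro hxx
      exact h.2.2 x ((repl_eq_out (Or.inl hx)).1 hxx)

private lemma repl_interval {S : Set C} {r : C → C → Prop} {q : ↥S → ↥S → Prop}
    (hS : IsInterval r S) : IsInterval (repl S r q) S := by
  intro a ha b hb w h1 h2
  by_contra hw
  exact hw (hS a ha b hb w ((repl_eq_out (Or.inr hw)).1 h1) ((repl_eq_out (Or.inl hw)).1 h2))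

private lemma repl_sub {S : Set C} {r : C → C → Prop} {q : ↥S → ↥S → Prop} :
    (fun u v : ↥S => repl S r q ↑u ↑v) = q := by
  funext u v
  exact propext ((repl_eq_in u.2 v.2).trans (by rfl))

private lemma repl_cost_disjoint {S : Set C} {r : C → C → Prop} {q : ↥S → ↥S → Prop}
    {B : Set C} (hBS : ∀ b ∈ B, b ∉ S) : costBC (repl S r q) B = costBC r B := by
  rw [costBC_eq_btw, costBC_eq_btw]
  congr 1
  ext b
  constructor
  · rintro ⟨hb, a, ha, c, hc, h1, h2⟩
    exact ⟨hb, a, ha, c, hc, (repl_eq_out (Or.inl (hBS a ha))).1 h1,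
      (repl_eq_out (Or.inr (hBS c hc))).1 h2⟩
  · rintro ⟨hb, a, ha, c, hc, h1, h2⟩
    exact ⟨hb, a, ha, c, hc, (repl_eq_out (Or.inl (hBS a ha))).2 h1,
      (repl_eq_out (Or.inr (hBS c hc))).2 h2⟩

private lemma profileCost_map_pre (M : Multiset (Set C)) (S : Set C) (q : ↥S → ↥S → Prop) :
    profileCost costBC (M.map (fun A => (Subtype.val ⁻¹' A : Set ↥S))) q
      = (M.map (fun A => costBC q (Subtype.val ⁻¹' A))).sum := by
  rw [profileCost, Multiset.map_map]
  rfl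


theorem bc_partition_consistency [Fintype C] (P : Multiset (Set C))
    (hP : ∀ B ∈ P, B.Nonempty) (r : C → C → Prop) :
    OptimalAxis costBC P r ↔
      (IsAxis r ∧ ∀ x : C,
        (∀ u ∈ coApprovalClass P x, ∀ v ∈ coApprovalClass P x, ∀ w : C,
          r u w → r w v → w ∈ coApprovalClass P x) ∧
        OptimalAxis costBC
          ((P.filter (fun A => A ⊆ coApprovalClass P x)).map
            (fun A => (Subtype.val ⁻¹' A : Set ↥(coApprovalClass P x))))
          (fun u v : ↥(coApprovalClass P x) => r u v)) := by
  constructor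
  · rintro ⟨hax, hopt⟩
    -- Step 1: every co-approval class is an interval of r
    have hint : ∀ x : C, IsInterval r (coApprovalClass P x) := by
      by_contra hctr
      push_neg at hctr
      obtain ⟨x, hni⟩ := hctr
      rw [IsInterval] at hni
      push_neg at hni
      obtain ⟨u, hu, v, hv, w, h1, h2, hw⟩ := hni
      have haxcr := cr_isAxis (P := P) hax
      have hle : ∀ B ∈ P, costBC (cr P r) B ≤ costBC r B := by
        intro B hB
        obtain ⟨b, hb⟩ := hP B hB
        have hBc : B ⊆ coApprovalClass P b := ballot_subset_class hB hb
        calc costBC (cr P r) B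
            = costBC (fun u v : ↥(coApprovalClass P b) => cr P r ↑u ↑v) (Subtype.val ⁻¹' B) :=
              (costBC_sub_eq_of_interval (class_interval_cr b) hBc).symm
          _ = costBC (fun u v : ↥(coApprovalClass P b) => r ↑u ↑v) (Subtype.val ⁻¹' B) :=
              congrArg (fun rel => costBC rel (Subtype.val ⁻¹' B)) (cr_sub_eq hax b)
          _ ≤ costBC r B := costBC_sub_le hBc
      have hEuv : Relation.EqvGen (coR P) u v :=
        Relation.EqvGen.trans _ _ _ (Relation.EqvGen.symm _ _ hu) hv
      rcases crossing hax hEuv w (Or.inl ⟨h1, h2⟩) with hc | ⟨A, hA, a, ha, c, hc, hr', hrel⟩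
      · exact hw (Relation.EqvGen.trans _ _ _ hu hc)
      · have haclass : a ∈ coApprovalClass P x := Relation.EqvGen.trans _ _ _ hu hrel
        have hAx : A ⊆ coApprovalClass P x := by
          intro b hb
          rw [← class_eq_of_mem haclass]
          exact ballot_subset_class hA ha hb
        have hwA : w ∉ A := fun hwa => hw (hAx hwa)
        have hwbtw : w ∈ btw r A := ⟨hwA, a, ha, c, hc, hr'⟩
        have hstrict : costBC (cr P r) A < costBC r A := by
          have e1 : costBC (cr P r) A = (btw r A ∩ coApprovalClass P x).ncard := by
            rw [← costBC_sub_eq_of_interval (class_interval_cr x) hAx,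
              congrArg (fun rel => costBC rel (Subtype.val ⁻¹' A)) (cr_sub_eq hax x),
              costBC_sub_eq hAx]
          rw [e1, costBC_eq_btw]
          apply Set.ncard_lt_ncard _ (Set.toFinite _)
          exact ⟨Set.inter_subset_left, fun hsub => hw (hsub hwbtw).2⟩
        have hlt : profileCost costBC P (cr P r) < profileCost costBC P r :=
          sum_map_lt hle hA hstrict
        exact absurd (hopt (cr P r) haxcr) (by omega)
    refine ⟨hax, fun x => ⟨hint x, axis_sub hax _, fun q hq => ?_⟩⟩
    -- Step 2: restriction is optimal
    have hSint : IsInterval r (coApprovalClass P x) := hint x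
    have htot := hopt (repl (coApprovalClass P x) r q) (repl_isAxis hax hSint hq)
    have hPsplit : P = P.filter (fun A => A ⊆ coApprovalClass P x) + P.filter (fun A => ¬ A ⊆ coApprovalClass P x) :=
      (Multiset.filter_add_not _ P).symm
    have htot2 : profileCost costBC (P.filter (fun A => A ⊆ coApprovalClass P x)) r
          + profileCost costBC (P.filter (fun A => ¬ A ⊆ coApprovalClass P x)) r
        ≤ profileCost costBC (P.filter (fun A => A ⊆ coApprovalClass P x)) (repl (coApprovalClass P x) r q)
          + profileCost costBC (P.filter (fun A => ¬ A ⊆ coApprovalClass P x)) (repl (coApprovalClass P x) r q) := by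
      rw [← profileCost_add, ← profileCost_add, ← hPsplit]
      exact htot
    clear htot
    have hN : profileCost costBC (P.filter (fun A => ¬ A ⊆ coApprovalClass P x)) (repl (coApprovalClass P x) r q)
        = profileCost costBC (P.filter (fun A => ¬ A ⊆ coApprovalClass P x)) r := by
      unfold profileCost
      apply congrArg
      apply Multiset.map_congr rfl
      intro B hB
      obtain ⟨hBP, hBnS⟩ := Multiset.mem_filter.1 hB
      apply repl_cost_disjoint
      intro b hbB hbS
      exact hBnS (by rw [← class_eq_of_mem hbS]; exact ballot_subset_class hBP hbB)
    rw [hN] at htot2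
    have hmain : profileCost costBC (P.filter (fun A => A ⊆ coApprovalClass P x)) r
        ≤ profileCost costBC (P.filter (fun A => A ⊆ coApprovalClass P x)) (repl (coApprovalClass P x) r q) := by omega
    rw [profileCost_map_pre, profileCost_map_pre]
    calc (Multiset.map (fun A => costBC (fun u v : ↥(coApprovalClass P x) => r ↑u ↑v) (Subtype.val ⁻¹' A))
            (P.filter (fun A => A ⊆ coApprovalClass P x))).sum
        = profileCost costBC (P.filter (fun A => A ⊆ coApprovalClass P x)) r := by
          unfold profileCost
          apply congrArg
          apply Multiset.map_congr rfl
          intro B hB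
          exact costBC_sub_eq_of_interval hSint (Multiset.mem_filter.1 hB).2
      _ ≤ profileCost costBC (P.filter (fun A => A ⊆ coApprovalClass P x)) (repl (coApprovalClass P x) r q) := hmain
      _ = (Multiset.map (fun A => costBC q (Subtype.val ⁻¹' A))
            (P.filter (fun A => A ⊆ coApprovalClass P x))).sum := by
          unfold profileCost
          apply congrArg
          apply Multiset.map_congr rfl
          intro B hB
          rw [← costBC_sub_eq_of_interval (repl_interval hSint) (Multiset.mem_filter.1 hB).2]
          exact congrArg (fun rel => costBC rel (Subtype.val ⁻¹' B)) repl_sub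
  · rintro ⟨hax, hall⟩
    refine ⟨hax, fun r0 hax0 => ?_⟩
    have hdec := profile_decomp P hP
    rw [hdec, profileCost_finsum, profileCost_finsum]
    apply Finset.sum_le_sum
    intro S hS
    obtain ⟨x, -, rfl⟩ := Finset.mem_image.1 hS
    have hSint : IsInterval r (coApprovalClass P x) := (hall x).1
    have hoptx := (hall x).2.2 (fun u v : ↥(coApprovalClass P x) => r0 ↑u ↑v) (axis_sub hax0 _)
    rw [profileCost_map_pre, profileCost_map_pre] at hoptx
    calc profileCost costBC (P.filter (fun A => A ⊆ coApprovalClass P x)) r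
        = (Multiset.map (fun A => costBC (fun u v : ↥(coApprovalClass P x) => r ↑u ↑v)
            (Subtype.val ⁻¹' A)) (P.filter (fun A => A ⊆ coApprovalClass P x))).sum := by
          unfold profileCost
          apply congrArg
          apply Multiset.map_congr rfl
          intro B hB
          exact (costBC_sub_eq_of_interval hSint (Multiset.mem_filter.1 hB).2).symm
      _ ≤ (Multiset.map (fun A => costBC (fun u v : ↥(coApprovalClass P x) => r0 ↑u ↑v)
            (Subtype.val ⁻¹' A)) (P.filter (fun A => A ⊆ coApprovalClass P x))).sum := hoptx
      _ ≤ profileCost costBC (P.filter (fun A => A ⊆ coApprovalClass P x)) r0 := by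
          unfold profileCost
          apply Multiset.sum_map_le_sum_map
          intro B hB
          exact costBC_sub_le (Multiset.mem_filter.1 hB).2
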